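/- For x ∈ ℂˣ the 3×3 matrix A(x) = (1/x)·[[0,0,1],[0,-1,-1],[x³, x³+1, 1]] lies in SL(3,ℂ) (det A(x) = 1) and satisfies A(x)³ = 1. -/

import Mathlib

open Matrix

/-- For `x ≠ 0`, the matrix `A(x) = (1/x)·[[0,0,1],[0,-1,-1],[x³,x³+1,1]]`
lies in `SL(3,ℂ)` (`det A(x) = 1`) and satisfies `A(x)³ = 1`. -/
theorem SL3_A_cubed (x : ℂ) (hx : x ≠ 0) :
    let A : Matrix (Fin 3) (Fin 3) ℂ :=
      x⁻¹ • !![0, 0, 1; 0, -1, -1; x ^ 3, x ^ 3 + 1, 1]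
    A.det = 1 ∧ A ^ 3 = 1 := by
  intro A
  constructor
  · simp only [A, Matrix.det_fin_three, Matrix.smul_apply, Matrix.cons_val', Matrix.cons_val_zero,
      Matrix.cons_val_one, Matrix.head_cons, Matrix.head_fin_const, Matrix.cons_val_fin_one,
      Matrix.empty_val', Matrix.cons_val_two, Matrix.tail_cons, smul_eq_mul, Matrix.of_apply]
    field_simp
    ring
  · rw [pow_succ, pow_succ, pow_one]
    have h1 : A * A * A = x⁻¹ ^ 3 • (!![0, 0, 1; 0, -1, -1; x ^ 3, x ^ 3 + 1, 1] *
        !![0, 0, 1; 0, -1, -1; x ^ 3, x ^ 3 + 1, 1] *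
        !![0, 0, 1; 0, -1, -1; x ^ 3, x ^ 3 + 1, 1]) := by
      simp [A, Matrix.smul_mul, Matrix.mul_smul, smul_smul]; ring_nf; simp
    rw [h1]
    ext i j
    fin_cases i <;> fin_cases j <;>
      (try simp [Matrix.mul_apply, Fin.sum_univ_three, Matrix.one_apply, Matrix.vecHead,
        Matrix.vecTail, hx]) <;>
      (try field_simp) <;> (try ring)
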